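/- Finite-time convergence: let f : ℝ → ℝ and suppose γ := min over p ∈ [p*+ε₁, 1-δ] of (p - f(p)) satisfies γ > 0, with p* ≤ f(p) for p in [p*, 1]. Then the sequence p_1 = 1-δ, p_{j+1} = f(p_j) satisfies p_ℓ ≤ p* + ε₁ for some ℓ ≤ ⌈(1 - p*)/γ⌉. -/
import Mathlib


/-- Finite-time convergence: if p - f(p) ≥ γ > 0 for p ∈ [p*+ε₁, 1-δ] and
f maps [p*,1] into [p*,1], then the sequence p₁ = 1-δ, p_{j+1} = f(p_j)
satisfies p_ℓ ≤ p* + ε₁ for some ℓ ≤ ⌈(1 - p*)/γ⌉. -/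
theorem density_evolution_finite_time (f : ℝ → ℝ)
    (pstar ε₁ δ γ : ℝ) (hp0 : 0 ≤ pstar) (hε₁ : 0 < ε₁)
    (horder : pstar + ε₁ < 1 - δ) (hδ : 0 < δ)
    (hγ : 0 < γ)
    (hdec : ∀ q ∈ Set.Icc (pstar + ε₁) (1 - δ), γ ≤ q - f q)
    (hmap : ∀ q ∈ Set.Icc pstar 1, f q ∈ Set.Icc pstar 1)
    (p : ℕ → ℝ) (hp_init : p 1 = 1 - δ)
    (hp_rec : ∀ j, 1 ≤ j → p (j + 1) = f (p j)) :
    ∃ ℓ : ℕ, 1 ≤ ℓ ∧ ℓ ≤ ⌈(1 - pstar) / γ⌉₊ ∧ p ℓ ≤ pstar + ε₁ := by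
  by_contra hcon
  push_neg at hcon
  set N := ⌈(1 - pstar) / γ⌉₊ with hNdef
  have h1pstar : (0:ℝ) < 1 - pstar := by linarith
  have hN1 : 1 ≤ N := by
    rw [hNdef, Nat.one_le_ceil_iff]
    positivity
  have hbig : ∀ ℓ, 1 ≤ ℓ → ℓ ≤ N → pstar + ε₁ < p ℓ := fun ℓ h1 h2 => hcon ℓ h1 h2
  have key : ∀ j, 1 ≤ j → j ≤ N → pstar ≤ p j ∧ p j ≤ 1 - δ - ((j:ℝ) - 1) * γ := by
    intro j hj
    induction j, hj using Nat.le_induction with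
    | base =>
      intro _
      rw [hp_init]
      constructor
      · linarith
      · push_cast; nlinarith
    | succ j hj ih =>
      intro hjN
      have hjN' : j ≤ N := Nat.le_of_succ_le hjN
      obtain ⟨h1, h2⟩ := ih hjN'
      have hjcast : (1:ℝ) ≤ (j:ℝ) := by exact_mod_cast hj
      have hbound : p j ≤ 1 - δ := by nlinarith
      have hgt : pstar + ε₁ < p j := hbig j hj hjN'
      have hdecj := hdec (p j) ⟨le_of_lt hgt, hbound⟩
      have hf := hmap (p j) ⟨h1, by linarith⟩
      rw [hp_rec j hj]
      refine ⟨hf.1, ?_⟩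
      push_cast
      linarith
  obtain ⟨h1, h2⟩ := key N hN1 le_rfl
  have hNcast : (1:ℝ) ≤ (N:ℝ) := by exact_mod_cast hN1
  have hbound : p N ≤ 1 - δ := by nlinarith
  have hgt : pstar + ε₁ < p N := hbig N hN1 le_rfl
  have hdecN := hdec (p N) ⟨le_of_lt hgt, hbound⟩
  have hf := hmap (p N) ⟨h1, by linarith⟩
  have hceil : (1 - pstar) / γ ≤ (N:ℝ) := Nat.le_ceil _
  have hNγ : 1 - pstar ≤ (N:ℝ) * γ := by
    rwa [div_le_iff₀ hγ] at hceil
  -- f (p N) ≥ pstar but f (p N) ≤ p N - γ ≤ 1 - δ - N γ ≤ pstar - δ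
  nlinarith [hf.1]
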